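/- arXiv:1306.1188 — 2 statements merged into one kernel-verified Lean document; each statement's English description precedes it below -/
import Mathlib

section
/- For all positive integers m, n there exist constants c, C > 0, depending only on m and n, with the following property. For all real n×m matrices D, E with ‖D‖ ≤ c, the function t ↦ √(det(Iₘ + (D+tE)ᵀ(D+tE))) is differentiable at t = 0 and | d/dt|_{t=0} √(det(Iₘ + (D+tE)ᵀ(D+tE))) − D : E | ≤ C ‖D‖³ ‖E‖. -/
open Matrix Polynomial

attribute [local instance] Matrix.frobeniusSeminormedAddCommGroup
  Matrix.frobeniusNormedAddCommGroup Matrix.frobeniusNormedSpace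
  Matrix.frobeniusNormedRing Matrix.frobeniusNormedAlgebra

/-- The Hilbert–Schmidt (Frobenius) norm of a matrix. -/
noncomputable def hsNorm {n m : ℕ} (D : Matrix (Fin n) (Fin m) ℝ) : ℝ :=
  Real.sqrt ((Dᵀ * D).trace)

namespace DerivAreaAux

variable {n m k : ℕ}

lemma trace_eq_sum (D E : Matrix (Fin n) (Fin m) ℝ) :
    (Dᵀ * E).trace = ∑ p : Fin m × Fin n, D p.2 p.1 * E p.2 p.1 := by
  rw [← Finset.univ_product_univ, Finset.sum_product]
  simp [Matrix.trace, Matrix.diag, Matrix.mul_apply, Matrix.transpose_apply]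

lemma hsNorm_nonneg (D : Matrix (Fin n) (Fin m) ℝ) : 0 ≤ hsNorm D := Real.sqrt_nonneg _

lemma abs_trace_le (D E : Matrix (Fin n) (Fin m) ℝ) :
    |(Dᵀ * E).trace| ≤ hsNorm D * hsNorm E := by
  rw [trace_eq_sum, hsNorm, hsNorm, trace_eq_sum D D, trace_eq_sum E E]
  have h := Finset.sum_mul_sq_le_sq_mul_sq Finset.univ
    (fun p : Fin m × Fin n => D p.2 p.1) (fun p : Fin m × Fin n => E p.2 p.1)
  have h2 : |∑ p : Fin m × Fin n, D p.2 p.1 * E p.2 p.1|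
      = Real.sqrt ((∑ p : Fin m × Fin n, D p.2 p.1 * E p.2 p.1) ^ 2) :=
    (Real.sqrt_sq_eq_abs _).symm
  rw [h2, ← Real.sqrt_mul (Finset.sum_nonneg fun p _ => mul_self_nonneg _)]
  apply Real.sqrt_le_sqrt
  calc (∑ p : Fin m × Fin n, D p.2 p.1 * E p.2 p.1) ^ 2
      ≤ (∑ p : Fin m × Fin n, D p.2 p.1 ^ 2) * ∑ p : Fin m × Fin n, E p.2 p.1 ^ 2 := h
    _ = (∑ p : Fin m × Fin n, D p.2 p.1 * D p.2 p.1) *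
        ∑ p : Fin m × Fin n, E p.2 p.1 * E p.2 p.1 := by simp [sq]

lemma hsNorm_eq_norm (D : Matrix (Fin n) (Fin m) ℝ) : hsNorm D = ‖D‖ := by
  have hx : ∀ x : ℝ, ‖x‖ ^ (2:ℝ) = x * x := fun x => by
    rw [show (2:ℝ) = ((2:ℕ):ℝ) by norm_num, Real.rpow_natCast, Real.norm_eq_abs, sq_abs, sq]
  have h1 : (Dᵀ * D).trace = ∑ i : Fin n, ∑ j : Fin m, ‖D i j‖ ^ (2:ℝ) := by
    rw [trace_eq_sum D D, ← Finset.univ_product_univ, Finset.sum_product, Finset.sum_comm]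
    simp only [hx]
  rw [hsNorm, Matrix.frobenius_norm_def, h1, Real.sqrt_eq_rpow]

lemma hsNorm_mul_le (A : Matrix (Fin n) (Fin m) ℝ) (B : Matrix (Fin m) (Fin k) ℝ) :
    hsNorm (A * B) ≤ hsNorm A * hsNorm B := by
  rw [hsNorm_eq_norm, hsNorm_eq_norm, hsNorm_eq_norm]
  exact Matrix.frobenius_norm_mul A B

lemma hsNorm_transpose (A : Matrix (Fin n) (Fin m) ℝ) : hsNorm Aᵀ = hsNorm A := by
  rw [hsNorm_eq_norm, hsNorm_eq_norm]
  exact Matrix.frobenius_norm_transpose A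

lemma contDiff_det {m : ℕ} : ContDiff ℝ 1 (fun M : Matrix (Fin m) (Fin m) ℝ => M.det) := by
  have hcoord : ∀ i j : Fin m, ContDiff ℝ 1 (fun M : Matrix (Fin m) (Fin m) ℝ => M i j) := by
    intro i j
    let L : Matrix (Fin m) (Fin m) ℝ →ₗ[ℝ] ℝ :=
      { toFun := fun M => M i j, map_add' := fun _ _ => rfl, map_smul' := fun _ _ => rfl }
    exact L.toContinuousLinearMap.contDiff
  have : (fun M : Matrix (Fin m) (Fin m) ℝ => M.det)
      = fun M => ∑ σ : Equiv.Perm (Fin m),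
          ((Equiv.Perm.sign σ : ℤ) : ℝ) * ∏ i, M (σ i) i := by
    funext M; rw [Matrix.det_apply']
  rw [this]
  exact ContDiff.sum fun σ _ => contDiff_const.mul
    (contDiff_prod fun i _ => hcoord (σ i) i)

lemma inv_bound (m : ℕ) : ∃ r K : ℝ, 0 < r ∧ 0 < K ∧
    ∀ A : Matrix (Fin m) (Fin m) ℝ, ‖A‖ ≤ r →
      ‖Real.sqrt ((1 + A).det) • Ring.inverse (1 + A) - 1‖ ≤ K * ‖A‖ := by
  set G : Matrix (Fin m) (Fin m) ℝ → Matrix (Fin m) (Fin m) ℝ :=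
    fun A => Real.sqrt ((1 + A).det) • Ring.inverse (1 + A) - 1 with hGdef
  have haff : ContDiff ℝ 1 (fun A : Matrix (Fin m) (Fin m) ℝ => 1 + A) :=
    contDiff_const.add contDiff_id
  have hG : ContDiffAt ℝ 1 G 0 := by
    have hsq : ContDiffAt ℝ 1 (fun A : Matrix (Fin m) (Fin m) ℝ =>
        Real.sqrt ((1 + A).det)) 0 := by
      have hd : ContDiffAt ℝ 1 (fun A : Matrix (Fin m) (Fin m) ℝ => (1 + A).det) 0 :=
        (contDiff_det.comp haff).contDiffAt
      have h1 : (fun A : Matrix (Fin m) (Fin m) ℝ => (1 + A).det) 0 ≠ 0 := by simp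
      exact (Real.contDiffAt_sqrt h1).comp 0 hd
    have hinv : ContDiffAt ℝ 1 (fun A : Matrix (Fin m) (Fin m) ℝ =>
        Ring.inverse (1 + A)) 0 := by
      have houter := contDiffAt_ringInverse ℝ (n := 1) (1 : (Matrix (Fin m) (Fin m) ℝ)ˣ)
      have heq : ((1 : (Matrix (Fin m) (Fin m) ℝ)ˣ) : Matrix (Fin m) (Fin m) ℝ)
          = (fun A : Matrix (Fin m) (Fin m) ℝ => 1 + A) 0 := by simp
      rw [heq] at houter
      exact houter.comp 0 haff.contDiffAt
    exact (hsq.smul hinv).sub contDiffAt_const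
  obtain ⟨K, t, ht, hK⟩ := hG.exists_lipschitzOnWith
  obtain ⟨r, hr, hball⟩ := Metric.mem_nhds_iff.mp ht
  refine ⟨r / 2, (K : ℝ) + 1, by positivity, by positivity, ?_⟩
  intro A hA
  have hAt : A ∈ t := hball (by
    simp only [Metric.mem_ball, dist_zero_right]
    linarith [norm_nonneg A])
  have h0t : (0 : Matrix (Fin m) (Fin m) ℝ) ∈ t := hball (by simp [hr])
  have hd := LipschitzOnWith.dist_le_mul hK A hAt 0 h0t
  have hG0 : G 0 = 0 := by simp [hGdef]
  rw [dist_eq_norm, hG0, sub_zero, dist_zero_right] at hd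
  calc ‖G A‖ ≤ K * ‖A‖ := hd
    _ ≤ ((K : ℝ) + 1) * ‖A‖ := by
        have := norm_nonneg A
        nlinarith [NNReal.coe_nonneg K]

lemma det_poly_hasDerivAt {m : ℕ} (M₀ H B : Matrix (Fin m) (Fin m) ℝ) (h : IsUnit M₀.det) :
    HasDerivAt (fun t : ℝ => (M₀ + t • H + (t * t) • B).det)
      (M₀.det * (M₀⁻¹ * H).trace) 0 := by
  set P : ℝ[X] := (M₀.map C + (X : ℝ[X]) • H.map C + ((X : ℝ[X]) * X) • B.map C).det with hP
  have heval : ∀ t : ℝ, P.eval t = (M₀ + t • H + (t * t) • B).det := by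
    intro t
    have h1 := RingHom.map_det (evalRingHom t)
      (M₀.map C + (X : ℝ[X]) • H.map C + ((X : ℝ[X]) * X) • B.map C)
    rw [RingHom.mapMatrix_apply] at h1
    have hmap : (M₀.map C + (X : ℝ[X]) • H.map C + ((X : ℝ[X]) * X) • B.map C).map
        (evalRingHom t) = M₀ + t • H + (t * t) • B := by
      ext i j
      simp only [Matrix.map_apply, Matrix.add_apply, Matrix.smul_apply, smul_eq_mul,
        coe_evalRingHom, eval_add, eval_mul, eval_C, eval_X]
    rw [hmap] at h1
    simpa using h1
  have hd0 : P.derivative.eval 0 = P.coeff 1 := by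
    rw [← Polynomial.coeff_zero_eq_eval_zero, Polynomial.coeff_derivative]
    simp
  set P' : ℝ[X] := (M₀.map C + (X : ℝ[X]) • H.map C).det with hP'
  have hc : P.coeff 1 = P'.coeff 1 := by
    set I : Ideal ℝ[X] := Ideal.span {(X : ℝ[X]) ^ 2} with hI
    have hmem : P - P' ∈ I := by
      rw [← Ideal.Quotient.mk_eq_mk_iff_sub_mem]
      rw [hP, hP', RingHom.map_det, RingHom.map_det, RingHom.mapMatrix_apply,
        RingHom.mapMatrix_apply]
      congr 1
      ext i j
      simp only [Matrix.map_apply, Matrix.add_apply, Matrix.smul_apply, smul_eq_mul]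
      rw [Ideal.Quotient.mk_eq_mk_iff_sub_mem]
      have : (X : ℝ[X]) ^ 2 * C (B i j) ∈ I := Ideal.mem_span_singleton.mpr ⟨C (B i j), rfl⟩
      convert this using 1
      ring
    obtain ⟨g, hg⟩ := Ideal.mem_span_singleton.mp hmem
    have h0 : ((X : ℝ[X]) ^ 2 * g).coeff 1 = 0 := by
      rw [mul_comm, Polynomial.coeff_mul_X_pow']
      norm_num
    have := congrArg (fun q : ℝ[X] => q.coeff 1) hg
    simp only [Polynomial.coeff_sub, h0] at this
    linarith
  have hc' : P'.coeff 1 = M₀.det * (M₀⁻¹ * H).trace := by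
    have hfac : M₀.map C + (X : ℝ[X]) • H.map C
        = M₀.map C * (1 + (X : ℝ[X]) • (M₀⁻¹ * H).map C) := by
      rw [mul_add, mul_one, Matrix.mul_smul, ← Matrix.map_mul,
        Matrix.mul_nonsing_inv_cancel_left _ _ h]
    rw [hP', hfac, Matrix.det_mul, ← RingHom.mapMatrix_apply, ← RingHom.map_det,
      Polynomial.coeff_C_mul, Matrix.coeff_det_one_add_X_smul_one]
  have hfin : HasDerivAt (fun t : ℝ => P.eval t) (M₀.det * (M₀⁻¹ * H).trace) 0 := by
    have := P.hasDerivAt (0 : ℝ)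
    rwa [hd0, hc, hc'] at this
  have hfun : (fun t : ℝ => P.eval t) = fun t : ℝ => (M₀ + t • H + (t * t) • B).det :=
    funext heval
  rwa [hfun] at hfin

end DerivAreaAux

set_option maxHeartbeats 1600000 in
open DerivAreaAux in
/-- For all positive integers `m, n` there exist constants `c, C > 0`,
depending only on `m` and `n`, such that for all real `n×m` matrices `D, E` with `‖D‖ ≤ c`,
the function `t ↦ √(det(Iₘ + (D+tE)ᵀ(D+tE)))` is differentiable at `t = 0` and its derivative `v`
satisfies `|v − D : E| ≤ C ‖D‖³ ‖E‖`, where `D : E = tr(Dᵀ E)`. -/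
theorem deriv_area_integrand (m n : ℕ) (hm : 0 < m) (hn : 0 < n) :
    ∃ c C : ℝ, 0 < c ∧ 0 < C ∧
      ∀ D E : Matrix (Fin n) (Fin m) ℝ, hsNorm D ≤ c →
        ∃ v : ℝ,
          HasDerivAt (fun t : ℝ => Real.sqrt ((1 + (D + t • E)ᵀ * (D + t • E)).det)) v 0 ∧
          |v - (Dᵀ * E).trace| ≤ C * (hsNorm D) ^ 3 * hsNorm E := by
  obtain ⟨r, K, hr, hK, hGb⟩ := inv_bound m
  refine ⟨min 1 (Real.sqrt r), K, lt_min one_pos (Real.sqrt_pos.mpr hr), hK, ?_⟩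
  intro D E hD
  have hDnn := hsNorm_nonneg D
  have hEnn := hsNorm_nonneg E
  -- positivity of the determinant
  have hposA : (Dᵀ * D).PosSemidef := by
    have := Matrix.posSemidef_conjTranspose_mul_self D
    rwa [Matrix.conjTranspose_eq_transpose_of_trivial] at this
  have hpos : (1 + Dᵀ * D).PosDef := Matrix.PosDef.add_posSemidef Matrix.PosDef.one hposA
  have hdet : 0 < (1 + Dᵀ * D).det := hpos.det_pos
  have hdu : IsUnit (1 + Dᵀ * D).det := isUnit_iff_ne_zero.mpr (ne_of_gt hdet)
  -- the determinant path and its derivative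
  have hder := det_poly_hasDerivAt (1 + Dᵀ * D) (Dᵀ * E + Eᵀ * D) (Eᵀ * E) hdu
  have hfun : (fun t : ℝ =>
        ((1 + Dᵀ * D) + t • (Dᵀ * E + Eᵀ * D) + (t * t) • (Eᵀ * E)).det)
      = fun t : ℝ => (1 + (D + t • E)ᵀ * (D + t • E)).det := by
    funext t
    congr 1
    simp only [Matrix.transpose_add, Matrix.transpose_smul, Matrix.add_mul, Matrix.mul_add,
      Matrix.smul_mul, Matrix.mul_smul, smul_smul, smul_add]
    abel
  rw [hfun] at hder
  have hg0 : (1 + (D + (0:ℝ) • E)ᵀ * (D + (0:ℝ) • E)).det = (1 + Dᵀ * D).det := by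
    norm_num
  have hder2 := hder.sqrt (x := 0) (by rw [hg0]; exact ne_of_gt hdet)
  rw [hg0] at hder2
  refine ⟨_, hder2, ?_⟩
  -- simplify the derivative value
  set s : ℝ := Real.sqrt ((1 + Dᵀ * D).det) with hs
  have hspos : 0 < s := Real.sqrt_pos.mpr hdet
  have hssq : s * s = (1 + Dᵀ * D).det := Real.mul_self_sqrt hdet.le
  have htr : ((1 + Dᵀ * D)⁻¹ * (Dᵀ * E + Eᵀ * D)).trace
      = 2 * ((1 + Dᵀ * D)⁻¹ * (Dᵀ * E)).trace := by
    rw [mul_add, Matrix.trace_add]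
    have hsym : (1 + Dᵀ * D)ᵀ = 1 + Dᵀ * D := by
      rw [Matrix.transpose_add, Matrix.transpose_one, Matrix.transpose_mul,
        Matrix.transpose_transpose]
    have h2 : ((1 + Dᵀ * D)⁻¹ * (Eᵀ * D)).trace = ((1 + Dᵀ * D)⁻¹ * (Dᵀ * E)).trace := by
      conv_lhs => rw [← Matrix.trace_transpose]
      rw [Matrix.transpose_mul, Matrix.transpose_mul, Matrix.transpose_transpose,
        Matrix.transpose_nonsing_inv, hsym, Matrix.trace_mul_comm]
    rw [h2]; ring
  have hv : (1 + Dᵀ * D).det * ((1 + Dᵀ * D)⁻¹ * (Dᵀ * E + Eᵀ * D)).trace / (2 * s)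
      = s * ((1 + Dᵀ * D)⁻¹ * (Dᵀ * E)).trace := by
    rw [htr, ← hssq]
    field_simp
  rw [hv]
  -- rewrite the difference as a trace against E
  set Z : Matrix (Fin m) (Fin m) ℝ := s • (1 + Dᵀ * D)⁻¹ - 1 with hZ
  have hsym : (1 + Dᵀ * D)ᵀ = 1 + Dᵀ * D := by
    rw [Matrix.transpose_add, Matrix.transpose_one, Matrix.transpose_mul,
      Matrix.transpose_transpose]
  have hZsym : Zᵀ = Z := by
    rw [hZ, Matrix.transpose_sub, Matrix.transpose_smul, Matrix.transpose_one,
      Matrix.transpose_nonsing_inv, hsym]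
  have hkey : s * ((1 + Dᵀ * D)⁻¹ * (Dᵀ * E)).trace - (Dᵀ * E).trace
      = ((D * Z)ᵀ * E).trace := by
    rw [Matrix.transpose_mul, hZsym, Matrix.mul_assoc, hZ, Matrix.sub_mul,
      Matrix.trace_sub, Matrix.smul_mul, Matrix.trace_smul, Matrix.one_mul, smul_eq_mul]
  rw [hkey]
  -- estimates
  have hb1 : |((D * Z)ᵀ * E).trace| ≤ hsNorm (D * Z) * hsNorm E := abs_trace_le _ _
  have hb2 : hsNorm (D * Z) ≤ hsNorm D * hsNorm Z := hsNorm_mul_le D Z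
  have hDD : hsNorm (Dᵀ * D) ≤ hsNorm D * hsNorm D := by
    have := hsNorm_mul_le Dᵀ D
    rwa [hsNorm_transpose] at this
  have hDr : hsNorm D ≤ Real.sqrt r := le_trans hD (min_le_right _ _)
  have hDDr : hsNorm (Dᵀ * D) ≤ r := by
    have h1 : hsNorm D * hsNorm D ≤ Real.sqrt r * Real.sqrt r :=
      mul_le_mul hDr hDr hDnn (Real.sqrt_nonneg r)
    rw [Real.mul_self_sqrt hr.le] at h1
    exact le_trans hDD h1
  have hZb : hsNorm Z ≤ K * hsNorm (Dᵀ * D) := by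
    have := hGb (Dᵀ * D) (by rw [← hsNorm_eq_norm]; exact hDDr)
    rw [← hsNorm_eq_norm, ← hsNorm_eq_norm] at this
    rwa [hZ, Matrix.nonsing_inv_eq_ringInverse]
  have hZb2 : hsNorm Z ≤ K * (hsNorm D * hsNorm D) :=
    le_trans hZb (by nlinarith [hsNorm_nonneg (Dᵀ * D)])
  have hZnn := hsNorm_nonneg Z
  have hDZnn := hsNorm_nonneg (D * Z)
  calc |((D * Z)ᵀ * E).trace| ≤ hsNorm (D * Z) * hsNorm E := hb1
    _ ≤ (hsNorm D * hsNorm Z) * hsNorm E := by nlinarith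
    _ ≤ (hsNorm D * (K * (hsNorm D * hsNorm D))) * hsNorm E :=
        mul_le_mul_of_nonneg_right (mul_le_mul_of_nonneg_left hZb2 hDnn) hEnn
    _ = K * hsNorm D ^ 3 * hsNorm E := by ring
end

section
/- For all positive integers m, n there exist constants c, C > 0, depending only on m and n, such that for all real n×m matrices D, A with ‖D‖ ≤ c and ‖A‖ ≤ c one has | 2√(det(Iₘ + Dᵀ D)) − 2 det(Iₘ + Dᵀ A) / √(det(Iₘ + Aᵀ A)) − ‖D − A‖² | ≤ C ( ‖D‖⁴ + ‖A‖⁴ ). -/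
open Matrix

lemma trace_tm (D : Matrix (Fin n) (Fin m) ℝ) :
    (Dᵀ * D).trace = ∑ j, ∑ i, (D i j) ^ 2 := by
  simp [Matrix.trace, Matrix.mul_apply, Matrix.diag, sq]

lemma trace_tm_nonneg (D : Matrix (Fin n) (Fin m) ℝ) : 0 ≤ (Dᵀ * D).trace := by
  rw [trace_tm]
  positivity

lemma hsNorm_nonneg (D : Matrix (Fin n) (Fin m) ℝ) : 0 ≤ hsNorm D := Real.sqrt_nonneg _

lemma hsNorm_sq (D : Matrix (Fin n) (Fin m) ℝ) : hsNorm D ^ 2 = (Dᵀ * D).trace := by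
  rw [hsNorm, Real.sq_sqrt (trace_tm_nonneg D)]

lemma entry_sq_le (D : Matrix (Fin n) (Fin m) ℝ) (i j) : (D i j)^2 ≤ hsNorm D ^ 2 := by
  rw [hsNorm_sq, trace_tm]
  calc (D i j)^2 ≤ ∑ i', (D i' j)^2 := by
        refine Finset.single_le_sum (f := fun i' => (D i' j)^2)
          (fun _ _ => sq_nonneg _) (Finset.mem_univ i)
    _ ≤ ∑ j', ∑ i', (D i' j')^2 := by
        refine Finset.single_le_sum (f := fun j' => ∑ i', (D i' j')^2)
          (fun _ _ => by positivity) (Finset.mem_univ j)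

lemma entry_abs_le (D : Matrix (Fin n) (Fin m) ℝ) (i j) : |D i j| ≤ hsNorm D := by
  have := entry_sq_le D i j
  nlinarith [abs_nonneg (D i j), hsNorm_nonneg D, sq_abs (D i j)]

lemma trace_mul_abs_le (D A : Matrix (Fin n) (Fin m) ℝ) :
    |(Dᵀ * A).trace| ≤ hsNorm D * hsNorm A := by
  have h : (Dᵀ * A).trace = ∑ p : Fin m × Fin n, D p.2 p.1 * A p.2 p.1 := by
    rw [← Finset.univ_product_univ, Finset.sum_product]
    simp [Matrix.trace, Matrix.mul_apply, Matrix.diag]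
  have hcs := Finset.sum_mul_sq_le_sq_mul_sq Finset.univ
      (fun p : Fin m × Fin n => D p.2 p.1) (fun p => A p.2 p.1)
  have hD : ∑ p : Fin m × Fin n, (D p.2 p.1)^2 = hsNorm D ^ 2 := by
    rw [hsNorm_sq, trace_tm, ← Finset.univ_product_univ, Finset.sum_product]
  have hA : ∑ p : Fin m × Fin n, (A p.2 p.1)^2 = hsNorm A ^ 2 := by
    rw [hsNorm_sq, trace_tm, ← Finset.univ_product_univ, Finset.sum_product]
  rw [h]
  rw [hD, hA] at hcs
  have h1 : 0 ≤ hsNorm D * hsNorm A := mul_nonneg (hsNorm_nonneg D) (hsNorm_nonneg A)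
  nlinarith [abs_nonneg (∑ p : Fin m × Fin n, D p.2 p.1 * A p.2 p.1),
    sq_abs (∑ p : Fin m × Fin n, D p.2 p.1 * A p.2 p.1)]

lemma prod_one_add_sub_bound {ι : Type*} [DecidableEq ι] (s : ℝ) (hs0 : 0 ≤ s) (hs1 : s ≤ 1)
    (S : Finset ι) (f : ι → ℝ) (hf : ∀ i ∈ S, |f i| ≤ s) :
    |∏ i ∈ S, (1 + f i) - 1 - ∑ i ∈ S, f i| ≤ S.card * 2 ^ S.card * s ^ 2 := by
  classical
  revert hf
  refine Finset.induction_on S ?_ ?_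
  · intro _; simp
  · intro a S ha ih hf
    have hfa : |f a| ≤ s := hf a (Finset.mem_insert_self a S)
    have ih' := ih (fun i hi => hf i (Finset.mem_insert_of_mem hi))
    rw [Finset.prod_insert ha, Finset.sum_insert ha, Finset.card_insert_of_notMem ha]
    have key : (1 + f a) * ∏ i ∈ S, (1 + f i) - 1 - (f a + ∑ i ∈ S, f i)
        = (1 + f a) * (∏ i ∈ S, (1 + f i) - 1 - ∑ i ∈ S, f i) + f a * ∑ i ∈ S, f i := by
      ring
    rw [key]
    have hSig : |∑ i ∈ S, f i| ≤ S.card * s := by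
      calc |∑ i ∈ S, f i| ≤ ∑ i ∈ S, |f i| := Finset.abs_sum_le_sum_abs _ _
        _ ≤ ∑ _i ∈ S, s := Finset.sum_le_sum (fun i hi => hf i (Finset.mem_insert_of_mem hi))
        _ = S.card * s := by rw [Finset.sum_const, nsmul_eq_mul]
    have h1a : |1 + f a| ≤ 2 := by
      calc |1 + f a| ≤ |(1:ℝ)| + |f a| := abs_add_le _ _
        _ ≤ 1 + 1 := by rw [abs_one]; linarith
        _ = 2 := by norm_num
    have hcard : (S.card : ℝ) ≤ 2 ^ (S.card + 1) := by
      have h := (Nat.lt_two_pow_self (n := S.card)).le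
      have h2 : (2:ℕ) ^ S.card ≤ 2 ^ (S.card + 1) := Nat.pow_le_pow_right (by norm_num) (by omega)
      exact_mod_cast h.trans h2
    calc |(1 + f a) * (∏ i ∈ S, (1 + f i) - 1 - ∑ i ∈ S, f i) + f a * ∑ i ∈ S, f i|
        ≤ |1 + f a| * |∏ i ∈ S, (1 + f i) - 1 - ∑ i ∈ S, f i| + |f a| * |∑ i ∈ S, f i| := by
          rw [← abs_mul, ← abs_mul]; exact abs_add_le _ _
      _ ≤ 2 * (S.card * 2 ^ S.card * s ^ 2) + s * (S.card * s) := by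
          refine add_le_add ?_ ?_
          · exact mul_le_mul h1a ih' (abs_nonneg _) (by norm_num)
          · exact mul_le_mul hfa hSig (abs_nonneg _) hs0
      _ ≤ ((S.card:ℝ) + 1) * 2 ^ (S.card + 1) * s ^ 2 := by
          have hsq : 0 ≤ s ^ 2 := sq_nonneg s
          have h2c : (0:ℝ) < 2 ^ S.card := by positivity
          have h2s : (2:ℝ) ^ (S.card + 1) = 2 * 2 ^ S.card := by rw [pow_succ]; ring
          rw [h2s] at hcard ⊢
          nlinarith [mul_le_mul_of_nonneg_right hcard hsq]
      _ = ((S.card + 1 : ℕ):ℝ) * 2 ^ (S.card + 1) * s ^ 2 := by push_cast; ring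
lemma one_add_apply_abs_le {m : ℕ} (M : Matrix (Fin m) (Fin m) ℝ) (hM : hsNorm M ≤ 1) (a b : Fin m) :
    |(1 + M) a b| ≤ 2 := by
  have h1 : |(1 : Matrix (Fin m) (Fin m) ℝ) a b| ≤ 1 := by
    rcases eq_or_ne a b with h | h
    · subst h; simp [Matrix.one_apply_eq]
    · simp [Matrix.one_apply_ne h]
  have h2 : |M a b| ≤ 1 := (entry_abs_le M a b).trans hM
  calc |(1 + M) a b| = |(1 : Matrix (Fin m) (Fin m) ℝ) a b + M a b| := by rw [Matrix.add_apply]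
    _ ≤ |(1 : Matrix (Fin m) (Fin m) ℝ) a b| + |M a b| := abs_add_le _ _
    _ ≤ 2 := by linarith

lemma det_one_add_bound (m : ℕ) :
    ∀ M : Matrix (Fin m) (Fin m) ℝ, hsNorm M ≤ 1 →
      |(1 + M).det - 1 - M.trace| ≤ ((m + m.factorial : ℕ) * 2 ^ m : ℝ) * hsNorm M ^ 2 := by
  intro M hM
  classical
  set s := hsNorm M with hs
  have hs0 : 0 ≤ s := hsNorm_nonneg M
  -- entries bound
  have hent : ∀ a b, |M a b| ≤ s := fun a b => entry_abs_le M a b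
  -- determinant expansion
  have hdet : (1 + M).det = ∑ σ : Equiv.Perm (Fin m), Equiv.Perm.sign σ • ∏ i, (1 + M) (σ i) i :=
    Matrix.det_apply _
  -- split off identity
  have hmem : (1 : Equiv.Perm (Fin m)) ∈ (Finset.univ : Finset (Equiv.Perm (Fin m))) :=
    Finset.mem_univ _
  rw [← Finset.add_sum_erase _ _ hmem] at hdet
  have hid : (Equiv.Perm.sign (1 : Equiv.Perm (Fin m))) • ∏ i, (1 + M) ((1 : Equiv.Perm (Fin m)) i) i
      = ∏ i, (1 + M i i) := by
    simp [Matrix.add_apply, Matrix.one_apply_eq]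
  rw [hid] at hdet
  have htr : M.trace = ∑ i, M i i := by simp [Matrix.trace, Matrix.diag]
  -- bound for non-identity permutations
  have hterm : ∀ σ ∈ (Finset.univ : Finset (Equiv.Perm (Fin m))).erase 1,
      |(Equiv.Perm.sign σ : ℤ) • ∏ i, (1 + M) (σ i) i| ≤ 2 ^ m * s ^ 2 := by
    intro σ hσ
    have hσ1 : σ ≠ 1 := Finset.ne_of_mem_erase hσ
    have hsupp : 1 < σ.support.card := Equiv.Perm.one_lt_card_support_of_ne_one hσ1
    obtain ⟨i₁, hi₁, i₂, hi₂, h12⟩ := Finset.one_lt_card.mp hsupp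
    have hσi₁ : σ i₁ ≠ i₁ := Equiv.Perm.mem_support.mp hi₁
    have hσi₂ : σ i₂ ≠ i₂ := Equiv.Perm.mem_support.mp hi₂
    have habs : |(Equiv.Perm.sign σ : ℤ) • ∏ i, (1 + M) (σ i) i| = ∏ i, |(1 + M) (σ i) i| := by
      rw [zsmul_eq_mul, abs_mul, Finset.abs_prod]
      rcases Int.units_eq_one_or (Equiv.Perm.sign σ) with h | h <;> simp [h]
    rw [habs]
    set f : Fin m → ℝ := fun i => |(1 + M) (σ i) i| with hf
    have hf1 : f i₁ ≤ s := by
      simp only [hf, Matrix.add_apply, Matrix.one_apply_ne hσi₁, zero_add]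
      exact hent _ _
    have hf2 : f i₂ ≤ s := by
      simp only [hf, Matrix.add_apply, Matrix.one_apply_ne hσi₂, zero_add]
      exact hent _ _
    have hmem₁ : i₁ ∈ (Finset.univ : Finset (Fin m)) := Finset.mem_univ _
    have hmem₂ : i₂ ∈ (Finset.univ : Finset (Fin m)).erase i₁ :=
      Finset.mem_erase.mpr ⟨(Ne.symm h12), Finset.mem_univ _⟩
    rw [← Finset.mul_prod_erase _ f hmem₁, ← Finset.mul_prod_erase _ f hmem₂]
    have hrest : ∏ i ∈ ((Finset.univ : Finset (Fin m)).erase i₁).erase i₂, f i ≤ 2 ^ m := by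
      calc ∏ i ∈ ((Finset.univ : Finset (Fin m)).erase i₁).erase i₂, f i
          ≤ ∏ _i ∈ ((Finset.univ : Finset (Fin m)).erase i₁).erase i₂, (2:ℝ) :=
            Finset.prod_le_prod (fun i _ => abs_nonneg _)
              (fun i _ => one_add_apply_abs_le M hM _ _)
        _ = 2 ^ (((Finset.univ : Finset (Fin m)).erase i₁).erase i₂).card := by
            rw [Finset.prod_const]
        _ ≤ 2 ^ m := by
            apply pow_le_pow_right₀ (by norm_num)
            calc (((Finset.univ : Finset (Fin m)).erase i₁).erase i₂).card
                ≤ (Finset.univ : Finset (Fin m)).card := by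
                  exact (Finset.card_erase_le).trans Finset.card_erase_le
              _ = m := by simp
    have hrest0 : 0 ≤ ∏ i ∈ ((Finset.univ : Finset (Fin m)).erase i₁).erase i₂, f i :=
      Finset.prod_nonneg (fun i _ => abs_nonneg _)
    calc f i₁ * (f i₂ * ∏ i ∈ ((Finset.univ : Finset (Fin m)).erase i₁).erase i₂, f i)
        ≤ s * (s * 2 ^ m) := by
          refine mul_le_mul hf1 ?_ (by positivity) hs0
          exact mul_le_mul hf2 hrest hrest0 hs0
      _ = 2 ^ m * s ^ 2 := by ring
  -- bound identity part
  have hidb : |∏ i, (1 + M i i) - 1 - ∑ i, M i i| ≤ (m : ℝ) * 2 ^ m * s ^ 2 := by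
    have h := prod_one_add_sub_bound s hs0 hM Finset.univ (fun i => M i i)
      (fun i _ => hent i i)
    simpa using h
  -- sum bound
  have hsum : |∑ σ ∈ (Finset.univ : Finset (Equiv.Perm (Fin m))).erase 1,
      (Equiv.Perm.sign σ : ℤ) • ∏ i, (1 + M) (σ i) i| ≤ (m.factorial : ℝ) * (2 ^ m * s ^ 2) := by
    calc |∑ σ ∈ (Finset.univ : Finset (Equiv.Perm (Fin m))).erase 1,
          (Equiv.Perm.sign σ : ℤ) • ∏ i, (1 + M) (σ i) i|
        ≤ ∑ σ ∈ (Finset.univ : Finset (Equiv.Perm (Fin m))).erase 1,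
          |(Equiv.Perm.sign σ : ℤ) • ∏ i, (1 + M) (σ i) i| := Finset.abs_sum_le_sum_abs _ _
      _ ≤ ∑ _σ ∈ (Finset.univ : Finset (Equiv.Perm (Fin m))).erase 1, 2 ^ m * s ^ 2 :=
          Finset.sum_le_sum hterm
      _ = (((Finset.univ : Finset (Equiv.Perm (Fin m))).erase 1).card : ℝ) * (2 ^ m * s ^ 2) := by
          rw [Finset.sum_const, nsmul_eq_mul]
      _ ≤ (m.factorial : ℝ) * (2 ^ m * s ^ 2) := by
          refine mul_le_mul_of_nonneg_right ?_ (by positivity)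
          have h1 : ((Finset.univ : Finset (Equiv.Perm (Fin m))).erase 1).card
              ≤ (Finset.univ : Finset (Equiv.Perm (Fin m))).card := Finset.card_erase_le
          have h2 : (Finset.univ : Finset (Equiv.Perm (Fin m))).card = m.factorial := by
            rw [Finset.card_univ, Fintype.card_perm, Fintype.card_fin]
          exact_mod_cast h1.trans_eq h2
  -- combine
  have hcomb : (1 + M).det - 1 - M.trace
      = (∏ i, (1 + M i i) - 1 - ∑ i, M i i)
        + ∑ σ ∈ (Finset.univ : Finset (Equiv.Perm (Fin m))).erase 1,
          (Equiv.Perm.sign σ : ℤ) • ∏ i, (1 + M) (σ i) i := by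
    rw [hdet, htr]
    simp only [Units.smul_def]
    ring
  rw [hcomb]
  calc |(∏ i, (1 + M i i) - 1 - ∑ i, M i i)
        + ∑ σ ∈ (Finset.univ : Finset (Equiv.Perm (Fin m))).erase 1,
          (Equiv.Perm.sign σ : ℤ) • ∏ i, (1 + M) (σ i) i|
      ≤ |∏ i, (1 + M i i) - 1 - ∑ i, M i i|
        + |∑ σ ∈ (Finset.univ : Finset (Equiv.Perm (Fin m))).erase 1,
          (Equiv.Perm.sign σ : ℤ) • ∏ i, (1 + M) (σ i) i| := abs_add_le _ _
    _ ≤ (m : ℝ) * 2 ^ m * s ^ 2 + (m.factorial : ℝ) * (2 ^ m * s ^ 2) := add_le_add hidb hsum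
    _ = ((m + m.factorial : ℕ) * 2 ^ m : ℝ) * s ^ 2 := by push_cast; ring

lemma sqrt_expand (x : ℝ) (hx : |x| ≤ 1/2) : |Real.sqrt (1+x) - 1 - x/2| ≤ x^2 := by
  have h1 : (0:ℝ) ≤ 1 + x := by cases abs_le.mp hx; linarith
  set t := Real.sqrt (1+x) with ht
  have ht0 : 0 ≤ t := Real.sqrt_nonneg _
  have ht2 : t^2 = 1 + x := Real.sq_sqrt h1
  have hxl := (abs_le.mp hx).1
  have hxu := (abs_le.mp hx).2
  rw [abs_le]
  constructor
  · nlinarith [sq_nonneg (t - (1 + x/2 - x^2)), sq_nonneg (t + (1 + x/2 - x^2)), sq_nonneg x]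
  · nlinarith [sq_nonneg (t - (1 + x/2)), sq_nonneg (t + (1 + x/2)), sq_nonneg x]

lemma inv_sqrt_expand (y : ℝ) (hy : |y| ≤ 1/2) : |1/Real.sqrt (1+y) - (1 - y/2)| ≤ y^2 := by
  have hyl := (abs_le.mp hy).1
  have hyu := (abs_le.mp hy).2
  have h1 : (0:ℝ) < 1 + y := by linarith
  set t := Real.sqrt (1+y) with ht
  have ht0 : 0 < t := Real.sqrt_pos.mpr h1
  have ht2 : t^2 = 1 + y := Real.sq_sqrt h1.le
  have ht7 : (0.7:ℝ) ≤ t := by nlinarith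
  have key : |1 - t + (y/2)*t| ≤ y^2 * t := by
    rw [abs_le]
    constructor
    · nlinarith [sq_nonneg (t - 1), sq_nonneg y, sq_nonneg (y*t), sq_nonneg (t*(1 - y/2 + y^2) - 1), sq_nonneg (t*(1-y/2+y^2) + 1)]
    · nlinarith [sq_nonneg (t - 1), sq_nonneg y, sq_nonneg (t*(1 - y/2 - y^2) - 1), sq_nonneg (t*(1-y/2-y^2) + 1)]
  have heq : 1/t - (1 - y/2) = (1 - t + (y/2)*t)/t := by
    field_simp; ring
  rw [heq, abs_div, abs_of_pos ht0, div_le_iff₀ ht0]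
  exact key

lemma hsNorm_mul_le {n m : ℕ} (D A : Matrix (Fin n) (Fin m) ℝ) :
    hsNorm (Dᵀ * A) ≤ hsNorm D * hsNorm A := by
  have key : ((Dᵀ*A)ᵀ * (Dᵀ*A)).trace ≤ (hsNorm D * hsNorm A)^2 := by
    rw [trace_tm]
    have h1 : ∀ (k j : Fin m), ((Dᵀ*A) j k)^2 ≤ (∑ i, (D i j)^2) * (∑ i, (A i k)^2) := by
      intro k j
      have h := Finset.sum_mul_sq_le_sq_mul_sq Finset.univ (fun i => D i j) (fun i => A i k)
      have h2 : (Dᵀ*A) j k = ∑ i, D i j * A i k := by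
        simp [Matrix.mul_apply, Matrix.transpose_apply]
      rw [h2]; exact h
    calc ∑ k, ∑ j, ((Dᵀ*A) j k)^2
        ≤ ∑ k, ∑ j, (∑ i, (D i j)^2) * (∑ i, (A i k)^2) := by
          refine Finset.sum_le_sum (fun k _ => Finset.sum_le_sum (fun j _ => h1 k j))
      _ = (∑ j, ∑ i, (D i j)^2) * (∑ k, ∑ i, (A i k)^2) := by
          rw [Finset.sum_comm]
          rw [← Finset.sum_mul_sum]
      _ = (hsNorm D * hsNorm A)^2 := by
          rw [mul_pow, hsNorm_sq, hsNorm_sq, trace_tm, trace_tm]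
  calc hsNorm (Dᵀ * A) = Real.sqrt (((Dᵀ*A)ᵀ * (Dᵀ*A)).trace) := rfl
    _ ≤ Real.sqrt ((hsNorm D * hsNorm A)^2) := Real.sqrt_le_sqrt key
    _ = hsNorm D * hsNorm A := Real.sqrt_sq (mul_nonneg (hsNorm_nonneg D) (hsNorm_nonneg A))

lemma hsNorm_diff_sq {n m : ℕ} (D A : Matrix (Fin n) (Fin m) ℝ) :
    hsNorm (D - A) ^ 2 = hsNorm D ^ 2 - 2 * (Dᵀ * A).trace + hsNorm A ^ 2 := by
  have hexp : (D - A)ᵀ * (D - A) = Dᵀ*D - Dᵀ*A - Aᵀ*D + Aᵀ*A := by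
    rw [Matrix.transpose_sub, Matrix.sub_mul, Matrix.mul_sub, Matrix.mul_sub]
    abel
  have htr : ((Dᵀ*A)ᵀ).trace = (Dᵀ*A).trace := Matrix.trace_transpose _
  have htr2 : (Aᵀ*D).trace = (Dᵀ*A).trace := by
    rw [← htr, Matrix.transpose_mul, Matrix.transpose_transpose]
  rw [hsNorm_sq, hsNorm_sq, hsNorm_sq, hexp]
  rw [Matrix.trace_add, Matrix.trace_sub, Matrix.trace_sub, htr2]
  ring

set_option maxHeartbeats 1000000 in
/-- For all positive integers `m, n` there exist constants `c, C > 0`,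
depending only on `m` and `n`, such that for all real `n×m` matrices `D, A` with
`‖D‖ ≤ c` and `‖A‖ ≤ c` one has
`|2√(det(Iₘ + DᵀD)) − 2 det(Iₘ + DᵀA)/√(det(Iₘ + AᵀA)) − ‖D − A‖²| ≤ C (‖D‖⁴ + ‖A‖⁴)`. -/
theorem excess_integrand_expansion (m n : ℕ) (hm : 0 < m) (hn : 0 < n) :
    ∃ c C : ℝ, 0 < c ∧ 0 < C ∧
      ∀ D A : Matrix (Fin n) (Fin m) ℝ, hsNorm D ≤ c → hsNorm A ≤ c →
        |2 * Real.sqrt ((1 + Dᵀ * D).det)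
            - 2 * (1 + Dᵀ * A).det / Real.sqrt ((1 + Aᵀ * A).det)
            - (hsNorm (D - A)) ^ 2|
          ≤ C * ((hsNorm D) ^ 4 + (hsNorm A) ^ 4) := by
  set K : ℝ := ((m + m.factorial : ℕ) * 2 ^ m : ℝ) with hK
  have hK1 : (1:ℝ) ≤ K := by
    rw [hK]
    have h1 : (1:ℝ) ≤ ((m + m.factorial : ℕ) : ℝ) := by
      have := Nat.factorial_pos m
      exact_mod_cast by omega
    have h2 : (1:ℝ) ≤ 2 ^ m := one_le_pow₀ (by norm_num)
    nlinarith [h1, h2]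
  have hK0 : (0:ℝ) ≤ K := by linarith
  refine ⟨1 / (2 * (K + 1)), 4 * K + 26, by positivity, by positivity, ?_⟩
  intro D A hD hA
  set c : ℝ := 1 / (2 * (K + 1)) with hc
  have hc0 : 0 < c := by positivity
  have hcK : K * c ^ 2 ≤ 1/4 := by
    have h : c ^ 2 = 1 / (4 * (K+1)^2) := by
      rw [hc, div_pow, one_pow]; congr 1; ring
    rw [h, mul_one_div, div_le_div_iff₀ (by positivity) (by norm_num)]
    linarith only [hK1, sq_nonneg K]
  have hchalf : c ≤ 1/2 := by
    rw [hc, div_le_div_iff₀ (by linarith) (by norm_num)]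
    linarith only [hK1]
  -- abbreviations
  set hd := hsNorm D with hhd
  set ha := hsNorm A with hha
  have hd0 : 0 ≤ hd := hsNorm_nonneg D
  have ha0 : 0 ≤ ha := hsNorm_nonneg A
  set a : ℝ := hd ^ 2 with haa
  set b : ℝ := ha ^ 2 with hbb
  have ha' : a ≤ c ^ 2 := by rw [haa]; exact pow_le_pow_left₀ hd0 hD 2
  have hb' : b ≤ c ^ 2 := by rw [hbb]; exact pow_le_pow_left₀ ha0 hA 2
  have ha0' : 0 ≤ a := sq_nonneg _
  have hb0' : 0 ≤ b := sq_nonneg _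
  have hc2quarter : c ^ 2 ≤ 1/4 := by
    have h := mul_le_mul hchalf hchalf hc0.le (by norm_num : (0:ℝ) ≤ 1/2)
    linarith only [h]
  have haq : a ≤ 1/4 := ha'.trans hc2quarter
  have hbq : b ≤ 1/4 := hb'.trans hc2quarter
  have hKa : K * a ≤ 1/4 := by
    have h1 : K * a ≤ K * c ^ 2 := mul_le_mul_of_nonneg_left ha' hK0
    linarith
  have hKb : K * b ≤ 1/4 := by
    have h1 : K * b ≤ K * c ^ 2 := mul_le_mul_of_nonneg_left hb' hK0
    linarith
  have hKaa : K * a * a ≤ (1/4) * a := mul_le_mul_of_nonneg_right hKa ha0'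
  have hKbb : K * b * b ≤ (1/4) * b := mul_le_mul_of_nonneg_right hKb hb0'
  set t : ℝ := (Dᵀ * A).trace with htdef
  have ht : |t| ≤ hd * ha := trace_mul_abs_le D A
  have htab : |t| ≤ (a + b) / 2 := by
    rw [haa, hbb]
    have h := sq_nonneg (hd - ha)
    linarith only [ht, h]
  -- determinant expansions
  have hDD : hsNorm (Dᵀ * D) ≤ a := by
    have h := hsNorm_mul_le D D
    rw [haa]; linarith only [h]
  have hAA : hsNorm (Aᵀ * A) ≤ b := by
    have h := hsNorm_mul_le A A
    rw [hbb]; linarith only [h]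
  have hDA : hsNorm (Dᵀ * A) ≤ hd * ha := hsNorm_mul_le D A
  have hDD1 : hsNorm (Dᵀ * D) ≤ 1 := hDD.trans (haq.trans (by norm_num))
  have hAA1 : hsNorm (Aᵀ * A) ≤ 1 := hAA.trans (hbq.trans (by norm_num))
  have hdha1 : hd * ha ≤ 1 := by
    have h := mul_le_mul hD hA ha0 hc0.le
    linarith only [h, hc2quarter]
  have hDA1 : hsNorm (Dᵀ * A) ≤ 1 := hDA.trans hdha1
  set ε₁ : ℝ := (1 + Dᵀ * D).det - 1 - a with he1def
  set ε₂ : ℝ := (1 + Dᵀ * A).det - 1 - t with he2def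
  set ε₃ : ℝ := (1 + Aᵀ * A).det - 1 - b with he3def
  have htraceDD : (Dᵀ * D).trace = a := (hsNorm_sq D).symm
  have htraceAA : (Aᵀ * A).trace = b := (hsNorm_sq A).symm
  have hb1 : |ε₁| ≤ K * a ^ 2 := by
    have h := det_one_add_bound m (Dᵀ * D) hDD1
    rw [htraceDD, ← hK] at h
    rw [he1def]
    refine h.trans ?_
    exact mul_le_mul_of_nonneg_left
      (pow_le_pow_left₀ (hsNorm_nonneg _) hDD 2) hK0
  have hb3 : |ε₃| ≤ K * b ^ 2 := by
    have h := det_one_add_bound m (Aᵀ * A) hAA1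
    rw [htraceAA, ← hK] at h
    rw [he3def]
    refine h.trans ?_
    exact mul_le_mul_of_nonneg_left
      (pow_le_pow_left₀ (hsNorm_nonneg _) hAA 2) hK0
  have hb2 : |ε₂| ≤ K * (a * b) := by
    have h := det_one_add_bound m (Dᵀ * A) hDA1
    rw [← htdef, ← hK] at h
    rw [he2def]
    refine h.trans ?_
    have h2 : hsNorm (Dᵀ * A) ^ 2 ≤ a * b := by
      have h3 := pow_le_pow_left₀ (hsNorm_nonneg (Dᵀ * A)) hDA 2
      rw [haa, hbb]; linarith only [h3]
    exact mul_le_mul_of_nonneg_left h2 hK0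
  -- the quantities x, y
  set x : ℝ := a + ε₁ with hxdef
  set y : ℝ := b + ε₃ with hydef
  have hxb : |x| ≤ 2 * a := by
    rw [hxdef]
    have h := abs_le.mp hb1
    rw [abs_le]
    constructor <;> [linarith only [h.1, hKaa, ha0']; linarith only [h.2, hKaa, ha0']]
  have hyb : |y| ≤ 2 * b := by
    rw [hydef]
    have h := abs_le.mp hb3
    rw [abs_le]
    constructor <;> [linarith only [h.1, hKbb, hb0']; linarith only [h.2, hKbb, hb0']]
  have hxhalf : |x| ≤ 1/2 := by linarith only [hxb, haq]
  have hyhalf : |y| ≤ 1/2 := by linarith only [hyb, hbq]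
  -- sqrt expansions
  set e₁ : ℝ := Real.sqrt (1 + x) - 1 - x/2 with hse1
  set e₂ : ℝ := 1/Real.sqrt (1 + y) - (1 - y/2) with hse2
  have hbe1 : |e₁| ≤ x ^ 2 := sqrt_expand x hxhalf
  have hbe2 : |e₂| ≤ y ^ 2 := inv_sqrt_expand y hyhalf
  have hbe1' : |e₁| ≤ 4 * a ^ 2 := by
    have h := pow_le_pow_left₀ (abs_nonneg x) hxb 2
    rw [sq_abs] at h
    refine hbe1.trans ?_
    linarith only [h]
  have hbe2' : |e₂| ≤ 4 * b ^ 2 := by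
    have h := pow_le_pow_left₀ (abs_nonneg y) hyb 2
    rw [sq_abs] at h
    refine hbe2.trans ?_
    linarith only [h]
  -- rewrite the determinants
  have hdetD : (1 + Dᵀ * D).det = 1 + x := by rw [hxdef, he1def]; ring
  have hdetA : (1 + Aᵀ * A).det = 1 + y := by rw [hydef, he3def]; ring
  have hdetDA : (1 + Dᵀ * A).det = 1 + t + ε₂ := by rw [he2def]; ring
  have hsqrtD : Real.sqrt ((1 + Dᵀ * D).det) = 1 + x/2 + e₁ := by
    rw [hdetD, hse1]; ring
  have hinvA : 1 / Real.sqrt ((1 + Aᵀ * A).det) = 1 - y/2 + e₂ := by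
    rw [hdetA, hse2]; ring
  have hdiff : (hsNorm (D - A)) ^ 2 = a - 2*t + b := by
    rw [hsNorm_diff_sq, ← haa, ← hbb, ← htdef]
  -- main identity
  have hexpr : 2 * Real.sqrt ((1 + Dᵀ * D).det)
      - 2 * (1 + Dᵀ * A).det / Real.sqrt ((1 + Aᵀ * A).det)
      - (hsNorm (D - A)) ^ 2
      = ε₁ + ε₃ + (-(2*ε₂)) + 2*e₁ + t*y + ε₂*y + (-((2 + 2*t + 2*ε₂)*e₂)) := by
    rw [div_eq_mul_one_div, hinvA, hsqrtD, hdetDA, hdiff, hxdef, hydef]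
    ring
  rw [hexpr]
  -- individual bounds
  have hKab0 : 0 ≤ K * (a - b)^2 := mul_nonneg hK0 (sq_nonneg _)
  have hB3 : |(-(2*ε₂))| ≤ K * (a^2 + b^2) := by
    rw [abs_neg, abs_mul, abs_two]
    linarith only [hb2, hKab0]
  have hB4 : |2*e₁| ≤ 8 * a^2 := by
    rw [abs_mul, abs_two]; linarith only [hbe1']
  have hB5 : |t*y| ≤ (3/2) * (a^2 + b^2) := by
    rw [abs_mul]
    have h1 : |t| * |y| ≤ ((a+b)/2) * (2*b) :=
      mul_le_mul htab hyb (abs_nonneg _) (by linarith)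
    linarith only [h1, sq_nonneg (a - b), sq_nonneg a]
  have hB6 : |ε₂*y| ≤ K * (a^2 + b^2) := by
    rw [abs_mul]
    have h1 : |ε₂| * |y| ≤ (K * (a*b)) * (2*b) :=
      mul_le_mul hb2 hyb (abs_nonneg _) (by positivity)
    have hint1 : 0 ≤ (a-b)^2 * b := mul_nonneg (sq_nonneg _) hb0'
    have hint2 : 0 ≤ (a^2+b^2) * (1-b) := mul_nonneg (by positivity) (by linarith)
    have h2 : 2*(a*b^2) ≤ a^2 + b^2 := by linarith only [hint1, hint2]
    have h3 : K * (2*(a*b^2)) ≤ K * (a^2+b^2) := mul_le_mul_of_nonneg_left h2 hK0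
    linarith only [h1, h3]
  have hB7 : |(-((2 + 2*t + 2*ε₂)*e₂))| ≤ 16 * b^2 := by
    rw [abs_neg, abs_mul]
    have hKab : K * a * b ≤ (1/4) * b := mul_le_mul_of_nonneg_right hKa hb0'
    have h1 : |2 + 2*t + 2*ε₂| ≤ 4 := by
      have h2 := abs_le.mp htab
      have h3 := abs_le.mp hb2
      rw [abs_le]
      constructor <;> [linarith only [h2.1, h3.1, hKab, haq, hbq, hb0'];
        linarith only [h2.2, h3.2, hKab, haq, hbq, hb0']]
    calc |2 + 2*t + 2*ε₂| * |e₂| ≤ 4 * (4 * b^2) :=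
          mul_le_mul h1 hbe2' (abs_nonneg _) (by norm_num)
      _ = 16 * b^2 := by ring
  -- triangle inequality
  have htri : ∀ u1 u2 u3 u4 u5 u6 u7 : ℝ, |u1 + u2 + u3 + u4 + u5 + u6 + u7|
      ≤ |u1| + |u2| + |u3| + |u4| + |u5| + |u6| + |u7| := by
    intro u1 u2 u3 u4 u5 u6 u7
    have h1 := abs_add_le (u1+u2+u3+u4+u5+u6) u7
    have h2 := abs_add_le (u1+u2+u3+u4+u5) u6
    have h3 := abs_add_le (u1+u2+u3+u4) u5
    have h4 := abs_add_le (u1+u2+u3) u4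
    have h5 := abs_add_le (u1+u2) u3
    have h6 := abs_add_le u1 u2
    linarith only [h1, h2, h3, h4, h5, h6]
  have hfinal := htri ε₁ ε₃ (-(2*ε₂)) (2*e₁) (t*y) (ε₂*y) (-((2 + 2*t + 2*ε₂)*e₂))
  have hgoal : hd ^ 4 + ha ^ 4 = a^2 + b^2 := by rw [haa, hbb]; ring
  rw [hgoal]
  have hKa2 : 0 ≤ K * a^2 := mul_nonneg hK0 (sq_nonneg a)
  have hKb2 : 0 ≤ K * b^2 := mul_nonneg hK0 (sq_nonneg b)
  linarith only [hfinal, hb1, hb3, hB3, hB4, hB5, hB6, hB7, hKa2, hKb2,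
    sq_nonneg a, sq_nonneg b]
end
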